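/- Let n ≥ 2, m ≥ 1 be integers and let D ≥ 1, λ₂ > 0, ε > 0, κ > 0 be reals with D ≤ log n and λ₂ ≥ 4/(n·D). Let L be a real n×n symmetric positive semidefinite matrix, and let x, x̃ ∈ ℝⁿ be vectors with xᵀ𝟙 = x̃ᵀ𝟙 = 0. Set η := κ·ε / (3·√(m·n·log n)·D) and assume: (i) λ₂·‖y‖_∞² ≤ yᵀ L y for y := x̃ − x (lower norm-equivalence bound); (ii) (x̃ − x)ᵀ L (x̃ − x) ≤ η² · xᵀ L x (relative solver error ‖x̃ − x‖_L ≤ η‖x‖_L); (iii) xᵀ L x ≤ 4m · ‖x‖_∞² (upper norm-equivalence bound with vol(G) = 2m); and (iv) ‖x‖_∞ ≤ D. Then ‖x̃ − x‖_∞ ≤ κ·ε/3. -/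

import Mathlib

open Matrix

theorem solver_error_propagation (n m : ℕ) (hn : 2 ≤ n) (hm : 1 ≤ m)
    (D lam2 ε κ : ℝ)
    (hD1 : 1 ≤ D) (hlam2pos : 0 < lam2) (hε : 0 < ε) (hκ : 0 < κ)
    (hDlog : D ≤ Real.log n)
    (hlam2 : 4 / ((n : ℝ) * D) ≤ lam2)
    (L : Matrix (Fin n) (Fin n) ℝ)
    (hsym : L.IsSymm) (hpsd : L.PosSemidef)
    (x xt : Fin n → ℝ)
    (hx1 : (∑ i, x i) = 0) (hxt1 : (∑ i, xt i) = 0)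
    (η : ℝ)
    (hη : η = κ * ε / (3 * Real.sqrt ((m : ℝ) * (n : ℝ) * Real.log n) * D))
    (hlower : lam2 * ‖xt - x‖ ^ 2 ≤ (xt - x) ⬝ᵥ L.mulVec (xt - x))
    (hsolver : (xt - x) ⬝ᵥ L.mulVec (xt - x) ≤ η ^ 2 * (x ⬝ᵥ L.mulVec x))
    (hupper : x ⬝ᵥ L.mulVec x ≤ 4 * (m : ℝ) * ‖x‖ ^ 2)
    (hxD : ‖x‖ ≤ D) :
    ‖xt - x‖ ≤ κ * ε / 3 := by
  have hn2 : (2:ℝ) ≤ (n:ℝ) := by exact_mod_cast hn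
  have hm1 : (1:ℝ) ≤ (m:ℝ) := by exact_mod_cast hm
  have hlog : 0 < Real.log n := Real.log_pos (by linarith)
  have hDpos : (0:ℝ) < D := by linarith
  have hs : 0 < (m:ℝ) * (n:ℝ) * Real.log n := by positivity
  have hη2 : η ^ 2 = κ^2 * ε^2 / (9 * ((m:ℝ) * (n:ℝ) * Real.log n) * D^2) := by
    rw [hη, div_pow, mul_pow, mul_pow, mul_pow, Real.sq_sqrt hs.le]; ring
  have hxsq : ‖x‖^2 ≤ D^2 := by nlinarith [norm_nonneg x]
  have hη2pos : 0 ≤ η^2 := sq_nonneg η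
  have hxLx : 0 ≤ x ⬝ᵥ L.mulVec x := by simpa using hpsd.dotProduct_mulVec_nonneg x
  have key : lam2 * ‖xt - x‖^2 ≤ η^2 * (4 * (m:ℝ) * D^2) := by
    calc lam2 * ‖xt - x‖^2 ≤ (xt - x) ⬝ᵥ L.mulVec (xt - x) := hlower
      _ ≤ η^2 * (x ⬝ᵥ L.mulVec x) := hsolver
      _ ≤ η^2 * (4 * (m:ℝ) * ‖x‖^2) := by
          exact mul_le_mul_of_nonneg_left hupper hη2pos
      _ ≤ η^2 * (4 * (m:ℝ) * D^2) := by
          apply mul_le_mul_of_nonneg_left _ hη2pos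
          nlinarith
  have hy2 : ‖xt - x‖^2 ≤ η^2 * ((m:ℝ) * (n:ℝ) * D^3) := by
    have h1 : (4 / ((n:ℝ) * D)) * ‖xt - x‖^2 ≤ η^2 * (4 * (m:ℝ) * D^2) := by
      calc (4 / ((n:ℝ) * D)) * ‖xt - x‖^2 ≤ lam2 * ‖xt - x‖^2 :=
            mul_le_mul_of_nonneg_right hlam2 (sq_nonneg _)
        _ ≤ _ := key
    have hnD : 0 < (n:ℝ) * D := by positivity
    rw [div_mul_eq_mul_div, div_le_iff₀ hnD] at h1
    nlinarith
  have hfinal : ‖xt - x‖^2 ≤ (κ * ε / 3)^2 := by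
    have h2 : η^2 * ((m:ℝ) * (n:ℝ) * D^3) = κ^2 * ε^2 * D / (9 * Real.log n) := by
      rw [hη2]; field_simp
    rw [h2] at hy2
    have h3 : κ^2 * ε^2 * D / (9 * Real.log n) ≤ (κ * ε / 3)^2 := by
      rw [div_le_iff₀ (by positivity)]
      have he : (κ * ε / 3)^2 * (9 * Real.log n) = κ^2 * ε^2 * Real.log n := by ring
      rw [he]
      have := mul_le_mul_of_nonneg_left hDlog (by positivity : (0:ℝ) ≤ κ^2 * ε^2)
      linarith
    linarith
  exact (pow_le_pow_iff_left₀ (norm_nonneg _) (by positivity) two_ne_zero).mp hfinal
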